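/- Let n₁, n₂ ≥ 1 with gcd(n₁, n₂) = 1, let R₁ be a finite commutative symmetric ℤ/n₁-algebra and let R₂ be a finite commutative symmetric ℤ/n₂-algebra. Then the product ring R₁ × R₂ is a symmetric ℤ/(n₁n₂)-algebra. -/

import Mathlib

/-- A commutative `ZMod n`-algebra is *symmetric* if it admits an additive group
homomorphism `ψ : R →+ ZMod n` whose kernel contains no nonzero ideal of `R`. -/
def IsSymmetricZModAlgebra (n : ℕ) (R : Type*) [CommRing R] [Algebra (ZMod n) R] : Prop :=
  ∃ ψ : R →+ ZMod n, ∀ I : Ideal R, (∀ x ∈ I, ψ x = 0) → I = ⊥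

/-- If `gcd(n₁, n₂) = 1`, `R₁` is a finite commutative symmetric `ZMod n₁`-algebra and `R₂`
is a finite commutative symmetric `ZMod n₂`-algebra, then `R₁ × R₂` is a symmetric
`ZMod (n₁ * n₂)`-algebra (with the `ZMod (n₁ * n₂)`-algebra structure coming from the
Chinese remainder theorem). -/
theorem prod_symmetric_coprime (n₁ n₂ : ℕ) (hn₁ : 1 ≤ n₁) (hn₂ : 1 ≤ n₂)
    (hcop : Nat.Coprime n₁ n₂) (R₁ R₂ : Type*) [CommRing R₁] [CommRing R₂]
    [Fintype R₁] [Fintype R₂] [Algebra (ZMod n₁) R₁] [Algebra (ZMod n₂) R₂]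
    (h₁ : IsSymmetricZModAlgebra n₁ R₁) (h₂ : IsSymmetricZModAlgebra n₂ R₂) :
    letI : Algebra (ZMod (n₁ * n₂)) (R₁ × R₂) :=
      RingHom.toAlgebra
        (((algebraMap (ZMod n₁) R₁).comp (ZMod.castHom (dvd_mul_right n₁ n₂) (ZMod n₁))).prod
          ((algebraMap (ZMod n₂) R₂).comp (ZMod.castHom (dvd_mul_left n₂ n₁) (ZMod n₂))))
    IsSymmetricZModAlgebra (n₁ * n₂) (R₁ × R₂) := by
  obtain ⟨ψ₁, hψ₁⟩ := h₁
  obtain ⟨ψ₂, hψ₂⟩ := h₂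
  let e := ZMod.chineseRemainder hcop
  refine ⟨(e.symm.toRingHom.toAddMonoidHom).comp
    ((ψ₁.comp (AddMonoidHom.fst R₁ R₂)).prod (ψ₂.comp (AddMonoidHom.snd R₁ R₂))), ?_⟩
  intro I hI
  rw [eq_bot_iff, SetLike.le_def]
  rintro ⟨a, b⟩ hab; rw [Ideal.mem_bot]
  have key : ∀ x y, (x, y) ∈ I → ψ₁ x = 0 ∧ ψ₂ y = 0 := by
    intro x y hxy
    have h0 := hI _ hxy
    simp only [AddMonoidHom.comp_apply, AddMonoidHom.prod_apply,
      RingHom.toAddMonoidHom_eq_coe, AddMonoidHom.coe_coe, RingEquiv.toRingHom_eq_coe,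
      ] at h0
    have : (ψ₁ x, ψ₂ y) = (0, 0) := by
      have := congrArg e h0
      simpa using this
    exact ⟨congrArg Prod.fst this, congrArg Prod.snd this⟩
  have ha : a = 0 := by
    let I₁ : Ideal R₁ :=
      { carrier := {x | (x, (0 : R₂)) ∈ I}
        zero_mem' := by exact I.zero_mem
        add_mem' := fun hx hy => by
          have := I.add_mem hx hy
          simpa using this
        smul_mem' := fun c x hx => by
          have := I.mul_mem_left (c, (0 : R₂)) hx
          simpa using this }
    have hbot : I₁ = ⊥ := hψ₁ _ (fun x hx => (key x 0 hx).1)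
    have hmem : a ∈ I₁ := by
      have : ((1 : R₁), (0 : R₂)) * (a, b) ∈ I := I.mul_mem_left _ hab
      simpa [I₁] using this
    simpa [hbot] using hmem
  have hb : b = 0 := by
    let I₂ : Ideal R₂ :=
      { carrier := {y | ((0 : R₁), y) ∈ I}
        zero_mem' := by exact I.zero_mem
        add_mem' := fun hx hy => by
          have := I.add_mem hx hy
          simpa using this
        smul_mem' := fun c y hy => by
          have := I.mul_mem_left ((0 : R₁), c) hy
          simpa using this }
    have hbot : I₂ = ⊥ := hψ₂ _ (fun y hy => (key 0 y hy).2)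
    have hmem : b ∈ I₂ := by
      have : ((0 : R₁), (1 : R₂)) * (a, b) ∈ I := I.mul_mem_left _ hab
      simpa [I₂] using this
    simpa [hbot] using hmem
  simp [ha, hb]
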